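/- Let M be an n×n complex matrix and a an index, and let t be a complex number with |t| < 1/‖M‖. Define W_a(t) = Σ_{ℓ≥0} (M^ℓ)_{a,a} t^ℓ and W*_a(t) = Σ_{ℓ≥1} w*_ℓ(a) t^ℓ where w*_1(a) = M_{a,a} and for ℓ ≥ 2, w*_ℓ(a) = (M_{a,ā} (M_{āā})^{ℓ−2} M_{ā,a}). Then W_a(t) = 1/(1 − W*_a(t)) whenever both series converge and W*_a(t) ≠ 1. -/

import Mathlib

open Matrix
open scoped Matrix.Norms.L2Operator

/-- `w*_ℓ(a)`: the weighted number of closed walks of length `ℓ` at `a` that do not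
visit `a` at any internal step: `w*_1(a) = M a a` and for `ℓ ≥ 2`,
`w*_ℓ(a) = M_{a,ā} (M_{āā})^{ℓ-2} M_{ā,a}`. -/
noncomputable def wstar {n : ℕ} (M : Matrix (Fin n) (Fin n) ℂ) (a : Fin n) : ℕ → ℂ
  | 0 => 0
  | 1 => M a a
  | (m + 2) =>
      (M.toBlock (fun i => i = a) (fun i => ¬ i = a) *
        (M.toBlock (fun i => ¬ i = a) (fun i => ¬ i = a)) ^ m *
          M.toBlock (fun i => ¬ i = a) (fun i => i = a)) ⟨a, rfl⟩ ⟨a, rfl⟩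

namespace WalkAuxNR

open Finset

variable {n : ℕ} (M : Matrix (Fin n) (Fin n) ℂ) (a : Fin n)

/-- `M` with column `a` zeroed out. -/
noncomputable def D : Matrix (Fin n) (Fin n) ℂ :=
  Matrix.of fun x y => if y = a then 0 else M x y

lemma mul_D_apply_a (N : Matrix (Fin n) (Fin n) ℂ) (x : Fin n) :
    (N * D M a) x a = 0 := by
  simp [Matrix.mul_apply, D]

lemma Dpow_apply_a (j : ℕ) (x : Fin n) : ((D M a) ^ (j + 1)) x a = 0 := by
  rw [pow_succ]; exact mul_D_apply_a M a _ x

lemma sum_compl_eq (f : Fin n → ℂ) (h : f a = 0) :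
    ∑ y : {i : Fin n // ¬ i = a}, f y.1 = ∑ y : Fin n, f y := by
  classical
  rw [← Finset.sum_compl_add_sum ({a} : Finset (Fin n)) f, Finset.sum_singleton, h, add_zero]
  exact (Finset.sum_subtype (p := fun i => ¬ i = a) ({a}ᶜ) (fun x => by simp) f).symm

lemma block_apply (m : ℕ) (x : Fin n) (hx : ¬ x = a) :
    (M.toBlock (fun i => i = a) (fun i => ¬ i = a) *
      (M.toBlock (fun i => ¬ i = a) (fun i => ¬ i = a)) ^ m) ⟨a, rfl⟩ ⟨x, hx⟩
      = ((D M a) ^ (m + 1)) a x := by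
  induction m generalizing x hx with
  | zero =>
    simp [Matrix.toBlock_apply, D, hx]
  | succ m ih =>
    have hD : ((D M a) ^ (m + 2)) a x = ∑ y : Fin n, ((D M a) ^ (m + 1)) a y * M y x := by
      rw [pow_succ, Matrix.mul_apply]
      refine Finset.sum_congr rfl fun y _ => ?_
      simp [D, hx]
    rw [hD, pow_succ, ← Matrix.mul_assoc, Matrix.mul_apply]
    have hstep : ∀ y : {i : Fin n // ¬ i = a},
        (M.toBlock (fun i => i = a) (fun i => ¬ i = a) *
          (M.toBlock (fun i => ¬ i = a) (fun i => ¬ i = a)) ^ m) ⟨a, rfl⟩ y *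
          (M.toBlock (fun i => ¬ i = a) (fun i => ¬ i = a)) y ⟨x, hx⟩
        = ((D M a) ^ (m + 1)) a y.1 * M y.1 x := by
      intro y
      rw [ih y.1 y.2, Matrix.toBlock_apply]
    rw [Finset.sum_congr rfl fun y _ => hstep y]
    exact sum_compl_eq a (fun y => ((D M a) ^ (m + 1)) a y * M y x)
      (by simp [Dpow_apply_a])

lemma wstar_eq (j : ℕ) : wstar M a (j + 1) = ((D M a) ^ j * M) a a := by
  cases j with
  | zero => simp [wstar]
  | succ m =>
    show (M.toBlock (fun i => i = a) (fun i => ¬ i = a) *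
        (M.toBlock (fun i => ¬ i = a) (fun i => ¬ i = a)) ^ m *
          M.toBlock (fun i => ¬ i = a) (fun i => i = a)) ⟨a, rfl⟩ ⟨a, rfl⟩ = _
    rw [Matrix.mul_apply, Matrix.mul_apply]
    have hstep : ∀ y : {i : Fin n // ¬ i = a},
        (M.toBlock (fun i => i = a) (fun i => ¬ i = a) *
          (M.toBlock (fun i => ¬ i = a) (fun i => ¬ i = a)) ^ m) ⟨a, rfl⟩ y *
          (M.toBlock (fun i => ¬ i = a) (fun i => i = a)) y ⟨a, rfl⟩
        = ((D M a) ^ (m + 1)) a y.1 * M y.1 a := by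
      intro y
      rw [block_apply M a m y.1 y.2, Matrix.toBlock_apply]
    rw [Finset.sum_congr rfl fun y _ => hstep y]
    exact sum_compl_eq a (fun y => ((D M a) ^ (m + 1)) a y * M y a)
      (by simp [Dpow_apply_a])

lemma telescope (X Y : Matrix (Fin n) (Fin n) ℂ) (ℓ : ℕ) :
    X ^ (ℓ + 1) = Y ^ (ℓ + 1) + ∑ j ∈ range (ℓ + 1), Y ^ j * (X - Y) * X ^ (ℓ - j) := by
  induction ℓ with
  | zero => simp
  | succ ℓ ih =>
    have h2 : ∀ j ∈ range (ℓ + 1),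
        Y * (Y ^ j * (X - Y) * X ^ (ℓ - j)) = Y ^ (j + 1) * (X - Y) * X ^ (ℓ + 1 - (j + 1)) := by
      intro j _
      rw [Nat.succ_sub_succ, pow_succ' Y j]
      noncomm_ring
    calc X ^ (ℓ + 2) = Y * X ^ (ℓ + 1) + (X - Y) * X ^ (ℓ + 1) := by
          rw [pow_succ' X (ℓ + 1)]; noncomm_ring
      _ = Y * (Y ^ (ℓ + 1) + ∑ j ∈ range (ℓ + 1), Y ^ j * (X - Y) * X ^ (ℓ - j)) +
            (X - Y) * X ^ (ℓ + 1) := by rw [← ih]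
      _ = Y ^ (ℓ + 2) + ((∑ j ∈ range (ℓ + 1), Y ^ (j + 1) * (X - Y) * X ^ (ℓ + 1 - (j + 1))) +
            (X - Y) * X ^ (ℓ + 1)) := by
          rw [mul_add, Finset.mul_sum, Finset.sum_congr rfl h2, ← pow_succ' Y (ℓ + 1), add_assoc]
      _ = Y ^ (ℓ + 2) + ∑ j ∈ range (ℓ + 2), Y ^ j * (X - Y) * X ^ (ℓ + 1 - j) := by
          rw [Finset.sum_range_succ' (fun j => Y ^ j * (X - Y) * X ^ (ℓ + 1 - j)) (ℓ + 1)]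
          norm_num

lemma mid (X N : Matrix (Fin n) (Fin n) ℂ) :
    (X * (M - D M a) * N) a a = (X * M) a a * N a a := by
  classical
  have hMD : ∀ y z, (M - D M a) y z = if z = a then M y a else 0 := by
    intro y z
    by_cases h : z = a <;> simp [D, h, Matrix.sub_apply]
  have hXa : ∀ z, (X * (M - D M a)) a z = if z = a then (X * M) a a else 0 := by
    intro z
    by_cases h : z = a
    · subst h
      rw [Matrix.mul_apply, Matrix.mul_apply, if_pos rfl]
      exact Finset.sum_congr rfl fun y _ => by rw [hMD, if_pos rfl]
    · rw [Matrix.mul_apply, if_neg h]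
      refine Finset.sum_eq_zero fun y _ => ?_
      rw [hMD, if_neg h, mul_zero]
  rw [Matrix.mul_apply]
  simp only [hXa, ite_mul, zero_mul]
  simp

lemma key (ℓ : ℕ) :
    (M ^ (ℓ + 1)) a a = ∑ j ∈ range (ℓ + 1), wstar M a (j + 1) * (M ^ (ℓ - j)) a a := by
  have h := telescope M (D M a) ℓ
  have h2 := congrArg (fun N : Matrix (Fin n) (Fin n) ℂ => N a a) h
  simp only [Matrix.add_apply, Matrix.sum_apply] at h2
  rw [h2, Dpow_apply_a, zero_add]
  refine Finset.sum_congr rfl fun j _ => ?_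
  rw [mid M a ((D M a) ^ j) (M ^ (ℓ - j)), wstar_eq]

lemma entry_norm_le (A : Matrix (Fin n) (Fin n) ℂ) (x y : Fin n) : ‖A x y‖ ≤ ‖A‖ := by
  classical
  have h1 := A.l2_opNorm_mulVec (EuclideanSpace.single y (1 : ℂ))
  rw [EuclideanSpace.norm_single, norm_one, mul_one] at h1
  set w : EuclideanSpace ℂ (Fin n) :=
    (EuclideanSpace.equiv (Fin n) ℂ).symm (A *ᵥ EuclideanSpace.single y (1 : ℂ)) with hw
  have hwx : w x = A x y := by
    simp [hw, Matrix.mulVec, dotProduct, EuclideanSpace.single_apply, mul_ite]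
  have h2 : ‖w x‖ ≤ ‖w‖ := by
    rw [EuclideanSpace.norm_eq]
    have h3 : ‖w x‖ = Real.sqrt (‖w x‖ ^ 2) := by
      rw [Real.sqrt_sq (norm_nonneg _)]
    rw [h3]
    apply Real.sqrt_le_sqrt
    exact Finset.single_le_sum (fun i _ => sq_nonneg ‖w i‖) (Finset.mem_univ x)
  calc ‖A x y‖ = ‖w x‖ := by rw [hwx]
    _ ≤ ‖w‖ := h2
    _ ≤ ‖A‖ := h1

lemma D_norm_le : ‖D M a‖ ≤ ‖M‖ := by
  classical
  set E : Matrix (Fin n) (Fin n) ℂ :=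
    Matrix.diagonal (fun y => if y = a then (0 : ℂ) else 1) with hE
  have hEsq : Eᴴ * E = E := by
    rw [hE, Matrix.diagonal_conjTranspose, Matrix.diagonal_mul_diagonal]
    ext x y
    by_cases hxy : x = y
    · subst hxy
      by_cases h : x = a <;> simp [Matrix.diagonal_apply_eq, h]
    · simp [Matrix.diagonal_apply_ne _ hxy]
  have hnorm := Matrix.l2_opNorm_conjTranspose_mul_self E
  rw [hEsq] at hnorm
  have hE1 : ‖E‖ ≤ 1 := by nlinarith [norm_nonneg E, sq_nonneg (‖E‖ - 1)]
  have hDE : D M a = M * E := by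
    ext x y
    by_cases h : y = a <;> simp [D, hE, Matrix.mul_diagonal, h]
  rw [hDE]
  calc ‖M * E‖ ≤ ‖M‖ * ‖E‖ := Matrix.l2_opNorm_mul M E
    _ ≤ ‖M‖ * 1 := mul_le_mul_of_nonneg_left hE1 (norm_nonneg M)
    _ = ‖M‖ := mul_one _

lemma Dpow_mul_norm_le (j : ℕ) : ‖(D M a) ^ j * M‖ ≤ ‖M‖ ^ (j + 1) := by
  induction j with
  | zero => simp
  | succ j ih =>
    have h1 : (D M a) ^ (j + 1) * M = D M a * ((D M a) ^ j * M) := by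
      rw [pow_succ' (D M a) j, mul_assoc]
    rw [h1]
    calc ‖D M a * ((D M a) ^ j * M)‖ ≤ ‖D M a‖ * ‖(D M a) ^ j * M‖ :=
          Matrix.l2_opNorm_mul _ _
      _ ≤ ‖M‖ * ‖M‖ ^ (j + 1) := by
          exact mul_le_mul (D_norm_le M a) ih (norm_nonneg _) (norm_nonneg _)
      _ = ‖M‖ ^ (j + 2) := by ring

lemma wstar_norm_le (j : ℕ) : ‖wstar M a (j + 1)‖ ≤ ‖M‖ ^ (j + 1) := by
  rw [wstar_eq]
  exact (entry_norm_le _ a a).trans (Dpow_mul_norm_le M a j)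

end WalkAuxNR

/-- The generating function `W_a(t) = ∑_ℓ (M^ℓ)_{a,a} t^ℓ` for closed walks at `a` and the
generating function `W*_a(t) = ∑_{ℓ≥1} w*_ℓ(a) t^ℓ` for non-returning closed walks at `a`
satisfy `W_a(t) = 1 / (1 − W*_a(t))`. -/
theorem walkGen_eq_inv_one_sub_nonReturning {n : ℕ} (M : Matrix (Fin n) (Fin n) ℂ)
    (a : Fin n) (t : ℂ) (ht : ‖t‖ < 1 / ‖M‖)
    (Wa Ws : ℂ)
    (hWa : HasSum (fun ℓ : ℕ => (M ^ ℓ) a a * t ^ ℓ) Wa)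
    (hWs : HasSum (fun ℓ : ℕ => wstar M a (ℓ + 1) * t ^ (ℓ + 1)) Ws)
    (hWs1 : Ws ≠ 1) :
    Wa = 1 / (1 - Ws) := by
  classical
  open Finset in
  have hM : 0 < ‖M‖ := by
    rcases lt_or_ge 0 ‖M‖ with h | h
    · exact h
    · exfalso
      have h0 : ‖M‖ = 0 := le_antisymm h (norm_nonneg M)
      rw [h0, div_zero] at ht
      exact absurd ht (not_lt.mpr (norm_nonneg t))
  have hr : ‖M‖ * ‖t‖ < 1 := by
    rw [lt_div_iff₀ hM] at ht
    linarith [mul_comm ‖t‖ ‖M‖ ▸ ht]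
  set r : ℝ := ‖M‖ * ‖t‖ with hrdef
  have hr0 : 0 ≤ r := mul_nonneg (norm_nonneg M) (norm_nonneg t)
  set f : ℕ → ℂ := fun j => wstar M a (j + 1) * t ^ (j + 1) with hf
  set g : ℕ → ℂ := fun ℓ => (M ^ ℓ) a a * t ^ ℓ with hg
  have hfb : ∀ j, ‖f j‖ ≤ r ^ (j + 1) := by
    intro j
    rw [hf]
    simp only [norm_mul, norm_pow, hrdef, mul_pow]
    exact mul_le_mul_of_nonneg_right (WalkAuxNR.wstar_norm_le M a j)
      (pow_nonneg (norm_nonneg t) _)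
  have hgb : ∀ ℓ, ‖g ℓ‖ ≤ r ^ ℓ := by
    intro ℓ
    cases ℓ with
    | zero => simp [hg, Matrix.one_apply_eq]
    | succ k =>
      rw [hg]
      simp only [norm_mul, norm_pow, hrdef, mul_pow]
      refine mul_le_mul_of_nonneg_right ?_ (pow_nonneg (norm_nonneg t) _)
      exact (WalkAuxNR.entry_norm_le _ a a).trans (norm_pow_le' M (Nat.succ_pos k))
  have hgeom : Summable (fun m : ℕ => r ^ m) := summable_geometric_of_lt_one hr0 hr
  have hfs : Summable fun j => ‖f j‖ :=
    Summable.of_nonneg_of_le (fun _ => norm_nonneg _) hfb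
      (by simpa [pow_succ'] using hgeom.mul_left r)
  have hgs : Summable fun ℓ => ‖g ℓ‖ :=
    Summable.of_nonneg_of_le (fun _ => norm_nonneg _) hgb hgeom
  have hmul := tsum_mul_tsum_eq_tsum_sum_range_of_summable_norm hfs hgs
  rw [hWs.tsum_eq, hWa.tsum_eq] at hmul
  have hconv : ∀ m : ℕ, ∑ k ∈ Finset.range (m + 1), f k * g (m - k) = g (m + 1) := by
    intro m
    have hterm : ∀ k ∈ Finset.range (m + 1),
        f k * g (m - k) = wstar M a (k + 1) * (M ^ (m - k)) a a * t ^ (m + 1) := by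
      intro k hk
      have hk' : k ≤ m := Nat.lt_succ_iff.mp (Finset.mem_range.mp hk)
      have hpow : t ^ (k + 1) * t ^ (m - k) = t ^ (m + 1) := by
        rw [← pow_add]; congr 1; omega
      rw [hf, hg]
      calc wstar M a (k + 1) * t ^ (k + 1) * ((M ^ (m - k)) a a * t ^ (m - k))
          = wstar M a (k + 1) * (M ^ (m - k)) a a * (t ^ (k + 1) * t ^ (m - k)) := by ring
        _ = wstar M a (k + 1) * (M ^ (m - k)) a a * t ^ (m + 1) := by rw [hpow]
    rw [Finset.sum_congr rfl hterm, ← Finset.sum_mul, ← WalkAuxNR.key M a m, hg]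
  have hmul2 : Ws * Wa = ∑' m : ℕ, g (m + 1) := by
    rw [hmul]; exact tsum_congr hconv
  have hsplit : Wa = g 0 + ∑' m : ℕ, g (m + 1) := by
    rw [← hWa.tsum_eq]
    exact Summable.tsum_eq_zero_add hWa.summable
  have hg0 : g 0 = 1 := by simp [hg, Matrix.one_apply_eq]
  have hfinal : Ws * Wa = Wa - 1 := by
    rw [hmul2]
    rw [hg0] at hsplit
    linear_combination -hsplit
  have h1 : (1 : ℂ) - Ws ≠ 0 := sub_ne_zero.mpr (Ne.symm hWs1)
  rw [eq_div_iff h1]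
  linear_combination -hfinal
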